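/- arXiv:1504.03238 — 5 statements merged into one kernel-verified Lean document; each statement's English description precedes it below -/
import Mathlib

section
/- Let n ≥ 2. Suppose H(x,z) = Σ_{k=0}^n g_k(x) z^k with g_k : ℝ≥0 → ℝ differentiable and linearly independent, and suppose there exist functions b, a, R on a non-trivial interval I such that ∂ₓH = b ∂_z H + (1/2) a ∂_{zz} H - R H on ℝ≥0 × I. Then R is a polynomial of degree at most 2, b is a polynomial of degree at most 3, and a is a polynomial of degree at most 4. -/
set_option maxHeartbeats 1000000

open scoped BigOperators

private lemma pow_shift1 (m : ℕ) (z : ℝ) :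
    z ^ 2 * ((m : ℝ) * z ^ (m - 1)) = (m : ℝ) * z ^ (m + 1) := by
  match m with
  | 0 => simp
  | (m+1) => push_cast; ring

private lemma pow_shift2 (m : ℕ) (z : ℝ) :
    z ^ 2 * ((m : ℝ) * ((m : ℝ) - 1) * z ^ (m - 2)) = (m : ℝ) * ((m : ℝ) - 1) * z ^ m := by
  match m with
  | 0 => simp
  | 1 => norm_num
  | (m+2) => push_cast; ring

private lemma aux_deg {u v : Polynomial ℝ} {m c : ℕ}
    (h : Polynomial.X ^ m * u = Polynomial.X ^ 2 * v) (hv : v.natDegree ≤ m + c) :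
    u.degree ≤ ((c + 2 : ℕ) : WithBot ℕ) := by
  by_cases hu : u = 0
  · simp [hu]
  · rw [← Polynomial.natDegree_le_iff_degree_le]
    have h1 : (Polynomial.X ^ m * u).natDegree = u.natDegree + m :=
      Polynomial.natDegree_X_pow_mul m hu
    have h2 : (Polynomial.X ^ 2 * v).natDegree ≤ 2 + v.natDegree := by
      calc (Polynomial.X ^ 2 * v).natDegree
          ≤ (Polynomial.X ^ 2 : Polynomial ℝ).natDegree + v.natDegree :=
            Polynomial.natDegree_mul_le
        _ = 2 + v.natDegree := by simp
    rw [h] at h1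
    omega

private lemma poly_part (n : ℕ) (hn : 2 ≤ n)
    (I : Set ℝ) (hIinf : I.Infinite)
    (b a R : ℝ → ℝ) (A : Fin (n+1) → Fin (n+1) → ℝ)
    (hS : ∀ z ∈ I, ∀ j : Fin (n+1),
      (∑ k : Fin (n+1), A k j * z ^ (k:ℕ)) =
        b z * ((j:ℕ):ℝ) * z ^ ((j:ℕ) - 1)
          + (1/2) * a z * (((j:ℕ):ℝ) * (((j:ℕ):ℝ) - 1)) * z ^ ((j:ℕ) - 2)
          - R z * z ^ (j:ℕ)) :
    (∃ p : Polynomial ℝ, p.degree ≤ 2 ∧ ∀ z ∈ I, R z = p.eval z) ∧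
    (∃ q : Polynomial ℝ, q.degree ≤ 3 ∧ ∀ z ∈ I, b z = q.eval z) ∧
    (∃ r : Polynomial ℝ, r.degree ≤ 4 ∧ ∀ z ∈ I, a z = r.eval z) := by
  classical
  obtain ⟨P, hPdef⟩ : ∃ w : Fin (n+1) → Polynomial ℝ,
      w = fun j => ∑ k : Fin (n+1), Polynomial.C (A k j) * Polynomial.X ^ (k:ℕ) := ⟨_, rfl⟩
  have hPeval : ∀ j z, (P j).eval z = ∑ k : Fin (n+1), A k j * z ^ (k:ℕ) := by
    intro j z
    simp [hPdef, Polynomial.eval_finset_sum]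
  have hPdeg : ∀ j, (P j).natDegree ≤ n := by
    intro j
    rw [hPdef]
    refine Polynomial.natDegree_sum_le_of_forall_le _ _ fun k _ => ?_
    exact le_trans (Polynomial.natDegree_C_mul_X_pow_le _ _) (by omega)
  have hlt : ∀ m : ℕ, m ≤ n → m < n + 1 := fun m hm => by omega
  -- answer polynomials from the bottom equations
  obtain ⟨p, hp⟩ : ∃ w : Polynomial ℝ, w = -(P ⟨0, hlt 0 (by omega)⟩) := ⟨_, rfl⟩
  obtain ⟨q, hq⟩ : ∃ w : Polynomial ℝ,
      w = P ⟨1, hlt 1 (by omega)⟩ - Polynomial.X * P ⟨0, hlt 0 (by omega)⟩ := ⟨_, rfl⟩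
  obtain ⟨r, hr⟩ : ∃ w : Polynomial ℝ,
      w = P ⟨2, hlt 2 hn⟩ - 2 * Polynomial.X * P ⟨1, hlt 1 (by omega)⟩
        + Polynomial.X^2 * P ⟨0, hlt 0 (by omega)⟩ := ⟨_, rfl⟩
  have hRp : ∀ z ∈ I, R z = p.eval z := by
    intro z hz
    have h := hS z hz ⟨0, hlt 0 (by omega)⟩
    simp only [Fin.val_mk, Nat.cast_zero, pow_zero] at h
    simp only [hp, Polynomial.eval_neg, hPeval]
    linear_combination h
  have hbq : ∀ z ∈ I, b z = q.eval z := by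
    intro z hz
    have h := hS z hz ⟨1, hlt 1 (by omega)⟩
    have hR := hRp z hz
    simp only [Fin.val_mk, Nat.cast_one, pow_zero, pow_one] at h
    simp only [hq, Polynomial.eval_sub, Polynomial.eval_mul, Polynomial.eval_X, hPeval]
    simp only [hp, Polynomial.eval_neg, hPeval] at hR
    norm_num at h
    linear_combination -h + z * hR
  have har : ∀ z ∈ I, a z = r.eval z := by
    intro z hz
    have h := hS z hz ⟨2, hlt 2 hn⟩
    have hR := hRp z hz
    have hb := hbq z hz
    simp only [Fin.val_mk, Nat.cast_ofNat, pow_one] at h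
    simp only [hr, Polynomial.eval_add, Polynomial.eval_sub, Polynomial.eval_mul,
      Polynomial.eval_pow, Polynomial.eval_X, Polynomial.eval_ofNat, hPeval]
    simp only [hp, Polynomial.eval_neg, hPeval] at hR
    simp only [hq, Polynomial.eval_sub, Polynomial.eval_mul, Polynomial.eval_X, hPeval] at hb
    norm_num at h
    linear_combination -h - 2*z*hb + z^2*hR
  -- multiplied-by-z² identities, uniform in the index
  have hstar : ∀ z ∈ I, ∀ m : ℕ, (hm : m ≤ n) →
      (m:ℝ) * b z * z ^ (m+1) + ((m:ℝ) * ((m:ℝ) - 1) / 2) * a z * z ^ m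
        - R z * z ^ (m+2) = z^2 * ((P ⟨m, hlt m hm⟩).eval z) := by
    intro z hz m hm
    have h := hS z hz ⟨m, hlt m hm⟩
    have h1 := pow_shift1 m z
    have h2 := pow_shift2 m z
    simp only [Fin.val_mk] at h
    rw [hPeval]
    linear_combination -z^2 * h - b z * h1 - (1/2) * a z * h2
  obtain ⟨N, hN⟩ : ∃ w : ℝ, w = (n : ℝ) := ⟨_, rfl⟩
  obtain ⟨rr, hrr⟩ : ∃ w : Polynomial ℝ,
      w = P ⟨n, hlt n le_rfl⟩ - 2 * Polynomial.X * P ⟨n-1, hlt (n-1) (by omega)⟩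
        + Polynomial.X^2 * P ⟨n-2, hlt (n-2) (by omega)⟩ := ⟨_, rfl⟩
  obtain ⟨qq, hqq⟩ : ∃ w : Polynomial ℝ,
      w = P ⟨n, hlt n le_rfl⟩ - Polynomial.X * P ⟨n-1, hlt (n-1) (by omega)⟩
        - Polynomial.C (N - 1) * rr := ⟨_, rfl⟩
  obtain ⟨pp, hpp⟩ : ∃ w : Polynomial ℝ,
      w = Polynomial.C N * qq + Polynomial.C (N * (N-1) / 2) * rr
        - P ⟨n, hlt n le_rfl⟩ := ⟨_, rfl⟩
  have cast1 : ((n - 1 : ℕ) : ℝ) = N - 1 := by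
    rw [Nat.cast_sub (by omega)]; simp [hN]
  have cast2 : ((n - 2 : ℕ) : ℝ) = N - 2 := by
    rw [Nat.cast_sub (by omega)]; simp [hN]
  -- pointwise top identities
  have hAz : ∀ z ∈ I, z ^ n * a z = z ^ 2 * rr.eval z := by
    intro z hz
    have s0 := hstar z hz n le_rfl
    have s1 := hstar z hz (n-1) (by omega)
    have s2 := hstar z hz (n-2) (by omega)
    simp only [cast1] at s1
    simp only [cast2] at s2
    have q1 : z ^ (n-1) = z ^ (n-2) * z := by
      rw [← pow_succ]; congr 1; omega
    have q2 : z ^ n = z ^ (n-2) * z ^ 2 := by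
      rw [← pow_add]; congr 1; omega
    have q3 : z ^ (n+1) = z ^ (n-2) * z ^ 3 := by
      rw [← pow_add]; congr 1; omega
    have q4 : z ^ (n+2) = z ^ (n-2) * z ^ 4 := by
      rw [← pow_add]; congr 1; omega
    have q1' : z ^ (n-1+1) = z ^ (n-2) * z ^ 2 := by
      rw [← pow_add]; congr 1; omega
    have q2' : z ^ (n-1+2) = z ^ (n-2) * z ^ 3 := by
      rw [← pow_add]; congr 1; omega
    have q3' : z ^ (n-2+1) = z ^ (n-2) * z := by
      rw [pow_succ]
    have q4' : z ^ (n-2+2) = z ^ (n-2) * z ^ 2 := by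
      rw [← pow_add]
    rw [q3, q2, q4] at s0
    rw [q1', q1, q2'] at s1
    rw [q3', q4'] at s2
    rw [q2]
    simp only [hrr, Polynomial.eval_add, Polynomial.eval_sub, Polynomial.eval_mul,
      Polynomial.eval_pow, Polynomial.eval_X, Polynomial.eval_ofNat]
    rw [← hN] at s0
    linear_combination s0 - 2*z*s1 + z^2*s2
  have hBz : ∀ z ∈ I, z ^ (n+1) * b z = z ^ 2 * qq.eval z := by
    intro z hz
    have s0 := hstar z hz n le_rfl
    have s1 := hstar z hz (n-1) (by omega)
    have ha := hAz z hz
    simp only [cast1] at s1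
    have q1 : z ^ (n-1) = z ^ (n-2) * z := by
      rw [← pow_succ]; congr 1; omega
    have q2 : z ^ n = z ^ (n-2) * z ^ 2 := by
      rw [← pow_add]; congr 1; omega
    have q3 : z ^ (n+1) = z ^ (n-2) * z ^ 3 := by
      rw [← pow_add]; congr 1; omega
    have q4 : z ^ (n+2) = z ^ (n-2) * z ^ 4 := by
      rw [← pow_add]; congr 1; omega
    have q1' : z ^ (n-1+1) = z ^ (n-2) * z ^ 2 := by
      rw [← pow_add]; congr 1; omega
    have q2' : z ^ (n-1+2) = z ^ (n-2) * z ^ 3 := by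
      rw [← pow_add]; congr 1; omega
    rw [q3, q2, q4] at s0
    rw [q1', q1, q2'] at s1
    rw [q2] at ha
    rw [q3]
    simp only [hqq, Polynomial.eval_sub, Polynomial.eval_mul, Polynomial.eval_X,
      Polynomial.eval_C]
    rw [← hN] at s0
    linear_combination s0 - z*s1 - (N-1)*ha
  have hRz : ∀ z ∈ I, z ^ (n+2) * R z = z ^ 2 * pp.eval z := by
    intro z hz
    have s0 := hstar z hz n le_rfl
    have ha := hAz z hz
    have hb := hBz z hz
    have q2 : z ^ n = z ^ (n-2) * z ^ 2 := by
      rw [← pow_add]; congr 1; omega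
    have q3 : z ^ (n+1) = z ^ (n-2) * z ^ 3 := by
      rw [← pow_add]; congr 1; omega
    have q4 : z ^ (n+2) = z ^ (n-2) * z ^ 4 := by
      rw [← pow_add]; congr 1; omega
    rw [q3, q2, q4] at s0
    rw [q2] at ha
    rw [q3] at hb
    rw [q4]
    simp only [hpp, Polynomial.eval_add, Polynomial.eval_sub, Polynomial.eval_mul,
      Polynomial.eval_C]
    rw [← hN] at s0
    linear_combination -s0 + N*hb + (N*(N-1)/2)*ha
  have lift : ∀ (u v : Polynomial ℝ), (∀ z ∈ I, u.eval z = v.eval z) → u = v := by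
    intro u v h
    exact Polynomial.eq_of_infinite_eval_eq u v (hIinf.mono fun z hz => h z hz)
  have hrrdeg : rr.natDegree ≤ n + 2 := by
    rw [hrr]
    refine le_trans (Polynomial.natDegree_add_le _ _) (max_le ?_ ?_)
    · refine le_trans (Polynomial.natDegree_sub_le _ _) (max_le ?_ ?_)
      · exact le_trans (hPdeg _) (by omega)
      · refine le_trans Polynomial.natDegree_mul_le ?_
        have h1 : (2 * Polynomial.X : Polynomial ℝ).natDegree ≤ 1 := by
          refine le_trans Polynomial.natDegree_mul_le ?_
          simp
        have := hPdeg ⟨n-1, hlt (n-1) (by omega)⟩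
        omega
    · refine le_trans Polynomial.natDegree_mul_le ?_
      have h1 : (Polynomial.X ^ 2 : Polynomial ℝ).natDegree ≤ 2 := by simp
      have := hPdeg ⟨n-2, hlt (n-2) (by omega)⟩
      omega
  have hqqdeg : qq.natDegree ≤ n + 2 := by
    rw [hqq]
    refine le_trans (Polynomial.natDegree_sub_le _ _) (max_le ?_ ?_)
    · refine le_trans (Polynomial.natDegree_sub_le _ _) (max_le ?_ ?_)
      · exact le_trans (hPdeg _) (by omega)
      · refine le_trans Polynomial.natDegree_mul_le ?_
        have := hPdeg ⟨n-1, hlt (n-1) (by omega)⟩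
        simp only [Polynomial.natDegree_X]
        omega
    · refine le_trans Polynomial.natDegree_mul_le ?_
      simp only [Polynomial.natDegree_C]
      omega
  have hppdeg : pp.natDegree ≤ n + 2 := by
    rw [hpp]
    refine le_trans (Polynomial.natDegree_sub_le _ _) (max_le ?_ ?_)
    · refine le_trans (Polynomial.natDegree_add_le _ _) (max_le ?_ ?_)
      · refine le_trans Polynomial.natDegree_mul_le ?_
        simp only [Polynomial.natDegree_C]
        omega
      · refine le_trans Polynomial.natDegree_mul_le ?_
        simp only [Polynomial.natDegree_C]
        omega
    · exact le_trans (hPdeg _) (by omega)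
  have hident_r : Polynomial.X ^ n * r = Polynomial.X ^ 2 * rr := by
    refine lift _ _ fun z hz => ?_
    simp only [Polynomial.eval_mul, Polynomial.eval_pow, Polynomial.eval_X]
    rw [← har z hz]
    exact hAz z hz
  have hident_q : Polynomial.X ^ (n+1) * q = Polynomial.X ^ 2 * qq := by
    refine lift _ _ fun z hz => ?_
    simp only [Polynomial.eval_mul, Polynomial.eval_pow, Polynomial.eval_X]
    rw [← hbq z hz]
    exact hBz z hz
  have hident_p : Polynomial.X ^ (n+2) * p = Polynomial.X ^ 2 * pp := by
    refine lift _ _ fun z hz => ?_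
    simp only [Polynomial.eval_mul, Polynomial.eval_pow, Polynomial.eval_X]
    rw [← hRp z hz]
    exact hRz z hz
  refine ⟨⟨p, ?_, hRp⟩, ⟨q, ?_, hbq⟩, ⟨r, ?_, har⟩⟩
  · have hd := aux_deg hident_p (c := 0) (by omega)
    exact le_trans hd (by norm_num)
  · have hd := aux_deg hident_q (c := 1) (by omega)
    exact le_trans hd (by norm_num)
  · have hd := aux_deg hident_r (c := 2) (by omega)
    exact le_trans hd (by norm_num)


private lemma coeff_exists
    (n : ℕ)
    (I : Set ℝ)
    (g g' : Fin (n + 1) → ℝ → ℝ)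
    (hli : LinearIndependent ℝ fun k => (Set.Ici (0 : ℝ)).restrict (g k))
    (b a R : ℝ → ℝ)
    (hPDE : ∀ x : ℝ, 0 ≤ x → ∀ z ∈ I,
      ∑ k : Fin (n + 1), g' k x * z ^ (k : ℕ) =
        b z * (∑ k : Fin (n + 1), g k x * (k : ℕ) * z ^ ((k : ℕ) - 1)) +
          (1 / 2) * a z *
            (∑ k : Fin (n + 1), g k x * (k : ℕ) * ((k : ℕ) - 1 : ℝ) * z ^ ((k : ℕ) - 2)) -
          R z * ∑ k : Fin (n + 1), g k x * z ^ (k : ℕ))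
    (hIinf : I.Infinite) :
    ∃ A : Fin (n+1) → Fin (n+1) → ℝ, ∀ z ∈ I, ∀ j : Fin (n+1),
      (∑ k : Fin (n+1), A k j * z ^ (k:ℕ)) =
        b z * ((j:ℕ):ℝ) * z ^ ((j:ℕ) - 1)
          + (1/2) * a z * (((j:ℕ):ℝ) * (((j:ℕ):ℝ) - 1)) * z ^ ((j:ℕ) - 2)
          - R z * z ^ (j:ℕ) := by
  classical
  set G : Fin (n+1) → (Set.Ici (0:ℝ)) → ℝ := fun k => (Set.Ici (0:ℝ)).restrict (g k) with hGdef
  set G' : Fin (n+1) → (Set.Ici (0:ℝ)) → ℝ := fun k => (Set.Ici (0:ℝ)).restrict (g' k) with hG'def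
  set c : Fin (n+1) → ℝ → ℝ := fun j z =>
    b z * ((j:ℕ):ℝ) * z ^ ((j:ℕ) - 1)
      + (1/2) * a z * (((j:ℕ):ℝ) * (((j:ℕ):ℝ) - 1)) * z ^ ((j:ℕ) - 2)
      - R z * z ^ (j:ℕ) with hc
  have hL : ∀ z ∈ I, (∑ k : Fin (n+1), (z ^ (k:ℕ)) • G' k) = ∑ j : Fin (n+1), c j z • G j := by
    intro z hz
    funext xp
    have hx : (0:ℝ) ≤ (xp : ℝ) := xp.2
    have hpde := hPDE xp hx z hz
    simp only [Finset.sum_apply, Pi.smul_apply, smul_eq_mul, hGdef, hG'def, hc,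
      Set.restrict_apply]
    calc (∑ k : Fin (n+1), z ^ (k:ℕ) * g' k xp)
        = ∑ k : Fin (n+1), g' k xp * z ^ (k:ℕ) := by
          exact Finset.sum_congr rfl fun k _ => by ring
      _ = b z * (∑ k : Fin (n + 1), g k xp * (k : ℕ) * z ^ ((k : ℕ) - 1)) +
          (1 / 2) * a z *
            (∑ k : Fin (n + 1), g k xp * (k : ℕ) * ((k : ℕ) - 1 : ℝ) * z ^ ((k : ℕ) - 2)) -
          R z * ∑ k : Fin (n + 1), g k xp * z ^ (k : ℕ) := hpde
      _ = ∑ j : Fin (n+1),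
            (b z * ((j:ℕ):ℝ) * z ^ ((j:ℕ) - 1)
              + (1/2) * a z * (((j:ℕ):ℝ) * (((j:ℕ):ℝ) - 1)) * z ^ ((j:ℕ) - 2)
              - R z * z ^ (j:ℕ)) * g j xp := by
          simp only [Finset.mul_sum, ← Finset.sum_sub_distrib, ← Finset.sum_add_distrib]
          exact Finset.sum_congr rfl fun j _ => by ring
  set V : Submodule ℝ ((Set.Ici (0:ℝ)) → ℝ) := Submodule.span ℝ (Set.range G) with hV
  have hGmem : ∀ j, G j ∈ V := fun j => Submodule.subset_span ⟨j, rfl⟩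
  have hLmem : ∀ z ∈ I, (∑ k : Fin (n+1), (z ^ (k:ℕ)) • G' k) ∈ V := by
    intro z hz
    rw [hL z hz]
    exact Submodule.sum_mem _ fun j _ => Submodule.smul_mem _ _ (hGmem j)
  set e := hIinf.natEmbedding with he
  set zp : Fin (n+1) → ℝ := fun i => (e (i:ℕ) : ℝ) with hzp
  have hzpI : ∀ i, zp i ∈ I := fun i => (e (i:ℕ)).2
  have hzpinj : Function.Injective zp := by
    intro i j hij
    exact Fin.val_injective (e.injective (Subtype.ext hij))
  set M : Matrix (Fin (n+1)) (Fin (n+1)) ℝ := Matrix.vandermonde zp with hM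
  have hdet : IsUnit M.det :=
    (Matrix.det_vandermonde_ne_zero_iff.mpr hzpinj).isUnit
  have hMinv : M⁻¹ * M = 1 := Matrix.nonsing_inv_mul M hdet
  have hG'mem : ∀ k, G' k ∈ V := by
    intro k
    have hrep : G' k = ∑ i : Fin (n+1), (M⁻¹ k i) • (∑ k' : Fin (n+1), (zp i ^ (k':ℕ)) • G' k') := by
      have hh : ∑ i : Fin (n+1), (M⁻¹ k i) • (∑ k' : Fin (n+1), (zp i ^ (k':ℕ)) • G' k')
          = ∑ k' : Fin (n+1), ((M⁻¹ * M) k k') • G' k' := by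
        simp only [Finset.smul_sum, smul_smul, Matrix.mul_apply, Finset.sum_smul, hM,
          Matrix.vandermonde_apply]
        rw [Finset.sum_comm]
      rw [hh, hMinv]
      simp [Matrix.one_apply]
    rw [hrep]
    exact Submodule.sum_mem _ fun i _ => Submodule.smul_mem _ _ (hLmem (zp i) (hzpI i))
  set B : Module.Basis (Fin (n+1)) ℝ V := Module.Basis.span hli with hB
  set A : Fin (n+1) → Fin (n+1) → ℝ := fun k j => B.repr ⟨G' k, hG'mem k⟩ j with hA
  have hrepr : ∀ k, G' k = ∑ j : Fin (n+1), A k j • G j := by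
    intro k
    have h1 := B.sum_repr ⟨G' k, hG'mem k⟩
    have h2 : ((∑ i : Fin (n+1), B.repr ⟨G' k, hG'mem k⟩ i • B i : V) : (Set.Ici (0:ℝ)) → ℝ)
        = G' k := congrArg Subtype.val h1
    rw [← h2, Submodule.coe_sum]
    refine Finset.sum_congr rfl fun j _ => ?_
    rw [hA]
    simp only [SetLike.val_smul, hB]
    congr 1
    exact congrArg Subtype.val (Module.Basis.span_apply hli j)
  refine ⟨A, ?_⟩
  intro z hz j
  have h0 : ∑ j : Fin (n+1), (c j z - ∑ k : Fin (n+1), A k j * z ^ (k:ℕ)) • G j = 0 := by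
    simp only [sub_smul, Finset.sum_sub_distrib]
    rw [← hL z hz]
    rw [sub_eq_zero]
    calc ∑ k : Fin (n+1), (z ^ (k:ℕ)) • G' k
        = ∑ k : Fin (n+1), (z ^ (k:ℕ)) • (∑ j : Fin (n+1), A k j • G j) := by
          exact Finset.sum_congr rfl fun k _ => by rw [← hrepr k]
      _ = ∑ j : Fin (n+1), (∑ k : Fin (n+1), A k j * z ^ (k:ℕ)) • G j := by
          simp only [Finset.smul_sum, smul_smul, Finset.sum_smul]
          rw [Finset.sum_comm]
          exact Finset.sum_congr rfl fun j _ => Finset.sum_congr rfl fun k _ => by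
            rw [mul_comm]
  have hz0 := linearIndependent_iff'.mp hli Finset.univ _ h0 j (Finset.mem_univ j)
  rw [← sub_eq_zero.mp hz0]


/-- Degree classification for scalar polynomial term structure models, `n ≥ 2`:
if `H(x,z) = Σ g_k(x) z^k` satisfies `∂ₓH = b ∂_zH + (1/2) a ∂_{zz}H - R H` on
`ℝ₊ × I` with the `g_k` linearly independent, then `R`, `b`, `a` agree on `I`
with polynomials of degree at most `2`, `3`, `4` respectively. -/
theorem polynomial_model_degree_classification
    (n : ℕ) (hn : 2 ≤ n)
    (I : Set ℝ) (hI : I.OrdConnected) (hnt : ∃ x ∈ I, ∃ y ∈ I, x ≠ y)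
    (g g' : Fin (n + 1) → ℝ → ℝ)
    (hderiv : ∀ k, ∀ x : ℝ, 0 ≤ x →
      HasDerivWithinAt (g k) (g' k x) (Set.Ici 0) x)
    (hli : LinearIndependent ℝ fun k => (Set.Ici (0 : ℝ)).restrict (g k))
    (b a R : ℝ → ℝ)
    (hPDE : ∀ x : ℝ, 0 ≤ x → ∀ z ∈ I,
      ∑ k : Fin (n + 1), g' k x * z ^ (k : ℕ) =
        b z * (∑ k : Fin (n + 1), g k x * (k : ℕ) * z ^ ((k : ℕ) - 1)) +
          (1 / 2) * a z *
            (∑ k : Fin (n + 1), g k x * (k : ℕ) * ((k : ℕ) - 1 : ℝ) * z ^ ((k : ℕ) - 2)) -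
          R z * ∑ k : Fin (n + 1), g k x * z ^ (k : ℕ)) :
    (∃ p : Polynomial ℝ, p.degree ≤ 2 ∧ ∀ z ∈ I, R z = p.eval z) ∧
    (∃ q : Polynomial ℝ, q.degree ≤ 3 ∧ ∀ z ∈ I, b z = q.eval z) ∧
    (∃ r : Polynomial ℝ, r.degree ≤ 4 ∧ ∀ z ∈ I, a z = r.eval z) := by
  obtain ⟨x₀, hx₀, y₀, hy₀, hxy⟩ := hnt
  have hIinf : I.Infinite := by
    rcases lt_or_gt_of_ne hxy with h | h
    · exact (Set.Icc_infinite h).mono (hI.out hx₀ hy₀)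
    · exact (Set.Icc_infinite h).mono (hI.out hy₀ hx₀)
  obtain ⟨A, hS⟩ := coeff_exists n I g g' hli b a R hPDE hIinf
  exact poly_part n hn I hIinf b a R A hS
end

section
/- Under the hypotheses of the degree-classification theorem with n ≥ 2, writing R(z) = R₀ + R₁z + R₂z², b(z) = b₀ + b₁z + b₂z² + b₃z³, a(z) = a₀ + a₁z + a₂z² + a₃z³ + a₄z⁴, the coefficients satisfy R₂ = (n/2)b₃ = -(n(n-1)/2)a₄ and R₁ = n b₂ + (n(n-1)/2) a₃. -/
open scoped BigOperators

open Polynomial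

noncomputable def sP (n : ℕ) (c : Fin (n+1) → ℝ) (e : Fin (n+1) → ℕ) : Polynomial ℝ :=
  ∑ k : Fin (n+1), C (c k) * X ^ (e k)

lemma sP_eval (n : ℕ) (c : Fin (n+1) → ℝ) (e : Fin (n+1) → ℕ) (z : ℝ) :
    (sP n c e).eval z = ∑ k : Fin (n+1), c k * z ^ (e k) := by
  rw [sP, Polynomial.eval_finset_sum]
  simp

lemma sP_coeff (n : ℕ) (c : Fin (n+1) → ℝ) (e : Fin (n+1) → ℕ) (m : ℕ) :
    (sP n c e).coeff m = ∑ k : Fin (n+1), if m = e k then c k else 0 := by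
  rw [sP, Polynomial.finset_sum_coeff]
  refine Finset.sum_congr rfl fun k _ => ?_
  rw [Polynomial.coeff_C_mul, Polynomial.coeff_X_pow]
  split_ifs <;> simp

lemma sP_coeff_single (n : ℕ) (c : Fin (n+1) → ℝ) (e : Fin (n+1) → ℕ) (m : ℕ)
    (i : Fin (n+1)) (hi : m = e i)
    (h0 : ∀ b : Fin (n+1), b ≠ i → m = e b → c b = 0) :
    (sP n c e).coeff m = c i := by
  rw [sP_coeff, Finset.sum_eq_single i]
  · rw [if_pos hi]
  · intro b _ hb
    split_ifs with h
    exacts [h0 b hb h, rfl]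
  · intro h; exact absurd (Finset.mem_univ i) h

lemma sP_coeff_zero (n : ℕ) (c : Fin (n+1) → ℝ) (e : Fin (n+1) → ℕ) (m : ℕ)
    (h0 : ∀ b : Fin (n+1), m = e b → c b = 0) :
    (sP n c e).coeff m = 0 := by
  rw [sP_coeff]
  refine Finset.sum_eq_zero fun b _ => ?_
  split_ifs with h
  exacts [h0 b h, rfl]

noncomputable def QQ (n : ℕ) (R₀ R₁ R₂ b₀ b₁ b₂ b₃ a₀ a₁ a₂ a₃ a₄ : ℝ)
    (g g' : Fin (n+1) → ℝ → ℝ) (x : ℝ) : Polynomial ℝ :=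
  let S0 := sP n (fun k => g k x) (fun k => (k : ℕ));
  let S1 := sP n (fun k => g k x * ((k : ℕ) : ℝ)) (fun k => (k : ℕ) - 1);
  let S2 := sP n (fun k => g k x * ((k : ℕ) : ℝ) * (((k : ℕ) : ℝ) - 1)) (fun k => (k : ℕ) - 2);
  sP n (fun k => g' k x) (fun k => (k : ℕ))
    - (C b₀ * S1 + C b₁ * (S1 * X ^ 1) + C b₂ * (S1 * X ^ 2) + C b₃ * (S1 * X ^ 3)
      + (C (a₀ / 2) * S2 + C (a₁ / 2) * (S2 * X ^ 1) + C (a₂ / 2) * (S2 * X ^ 2)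
        + C (a₃ / 2) * (S2 * X ^ 3) + C (a₄ / 2) * (S2 * X ^ 4))
      - (C R₀ * S0 + C R₁ * (S0 * X ^ 1) + C R₂ * (S0 * X ^ 2)))

lemma QQ_eval (n : ℕ) (R₀ R₁ R₂ b₀ b₁ b₂ b₃ a₀ a₁ a₂ a₃ a₄ : ℝ)
    (g g' : Fin (n+1) → ℝ → ℝ) (x z : ℝ) :
    (QQ n R₀ R₁ R₂ b₀ b₁ b₂ b₃ a₀ a₁ a₂ a₃ a₄ g g' x).eval z =
      (∑ k : Fin (n+1), g' k x * z ^ (k : ℕ)) -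
        ((b₀ + b₁ * z + b₂ * z ^ 2 + b₃ * z ^ 3) *
            (∑ k : Fin (n+1), g k x * (k : ℕ) * z ^ ((k : ℕ) - 1)) +
          (1 / 2) * (a₀ + a₁ * z + a₂ * z ^ 2 + a₃ * z ^ 3 + a₄ * z ^ 4) *
            (∑ k : Fin (n+1), g k x * (k : ℕ) * ((k : ℕ) - 1 : ℝ) * z ^ ((k : ℕ) - 2)) -
          (R₀ + R₁ * z + R₂ * z ^ 2) * ∑ k : Fin (n+1), g k x * z ^ (k : ℕ)) := by
  simp only [QQ, eval_sub, eval_add, eval_mul, eval_pow, eval_C, eval_X, sP_eval]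
  ring

lemma QQ_coeff (n : ℕ) (R₀ R₁ R₂ b₀ b₁ b₂ b₃ a₀ a₁ a₂ a₃ a₄ : ℝ)
    (g g' : Fin (n+1) → ℝ → ℝ) (x : ℝ) (m : ℕ) :
    (QQ n R₀ R₁ R₂ b₀ b₁ b₂ b₃ a₀ a₁ a₂ a₃ a₄ g g' x).coeff m =
      (sP n (fun k => g' k x) (fun k => (k : ℕ))).coeff m
        - (b₀ * (sP n (fun k => g k x * ((k : ℕ) : ℝ)) (fun k => (k : ℕ) - 1)).coeff m
            + b₁ * (if 1 ≤ m then (sP n (fun k => g k x * ((k : ℕ) : ℝ)) (fun k => (k : ℕ) - 1)).coeff (m - 1) else 0)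
            + b₂ * (if 2 ≤ m then (sP n (fun k => g k x * ((k : ℕ) : ℝ)) (fun k => (k : ℕ) - 1)).coeff (m - 2) else 0)
            + b₃ * (if 3 ≤ m then (sP n (fun k => g k x * ((k : ℕ) : ℝ)) (fun k => (k : ℕ) - 1)).coeff (m - 3) else 0)
          + (a₀ / 2 * (sP n (fun k => g k x * ((k : ℕ) : ℝ) * (((k : ℕ) : ℝ) - 1)) (fun k => (k : ℕ) - 2)).coeff m
            + a₁ / 2 * (if 1 ≤ m then (sP n (fun k => g k x * ((k : ℕ) : ℝ) * (((k : ℕ) : ℝ) - 1)) (fun k => (k : ℕ) - 2)).coeff (m - 1) else 0)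
            + a₂ / 2 * (if 2 ≤ m then (sP n (fun k => g k x * ((k : ℕ) : ℝ) * (((k : ℕ) : ℝ) - 1)) (fun k => (k : ℕ) - 2)).coeff (m - 2) else 0)
            + a₃ / 2 * (if 3 ≤ m then (sP n (fun k => g k x * ((k : ℕ) : ℝ) * (((k : ℕ) : ℝ) - 1)) (fun k => (k : ℕ) - 2)).coeff (m - 3) else 0)
            + a₄ / 2 * (if 4 ≤ m then (sP n (fun k => g k x * ((k : ℕ) : ℝ) * (((k : ℕ) : ℝ) - 1)) (fun k => (k : ℕ) - 2)).coeff (m - 4) else 0))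
          - (R₀ * (sP n (fun k => g k x) (fun k => (k : ℕ))).coeff m
            + R₁ * (if 1 ≤ m then (sP n (fun k => g k x) (fun k => (k : ℕ))).coeff (m - 1) else 0)
            + R₂ * (if 2 ≤ m then (sP n (fun k => g k x) (fun k => (k : ℕ))).coeff (m - 2) else 0))) := by
  simp only [QQ, coeff_sub, coeff_add, coeff_C_mul, coeff_mul_X_pow']

/-- Coefficient constraints in the degree classification theorem, `n ≥ 2`:
writing `R(z) = R₀+R₁z+R₂z²`, `b(z) = b₀+b₁z+b₂z²+b₃z³`,
`a(z) = a₀+a₁z+a₂z²+a₃z³+a₄z⁴`, one has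
`R₂ = (n/2) b₃ = -(n(n-1)/2) a₄` and `R₁ = n b₂ + (n(n-1)/2) a₃`. -/
theorem polynomial_model_coefficient_constraints
    (n : ℕ) (hn : 2 ≤ n)
    (I : Set ℝ) (hI : I.OrdConnected) (hnt : ∃ x ∈ I, ∃ y ∈ I, x ≠ y)
    (g g' : Fin (n + 1) → ℝ → ℝ)
    (hderiv : ∀ k, ∀ x : ℝ, 0 ≤ x →
      HasDerivWithinAt (g k) (g' k x) (Set.Ici 0) x)
    (hli : LinearIndependent ℝ fun k => (Set.Ici (0 : ℝ)).restrict (g k))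
    (b a R : ℝ → ℝ)
    (R₀ R₁ R₂ b₀ b₁ b₂ b₃ a₀ a₁ a₂ a₃ a₄ : ℝ)
    (hR : ∀ z ∈ I, R z = R₀ + R₁ * z + R₂ * z ^ 2)
    (hb : ∀ z ∈ I, b z = b₀ + b₁ * z + b₂ * z ^ 2 + b₃ * z ^ 3)
    (ha : ∀ z ∈ I, a z = a₀ + a₁ * z + a₂ * z ^ 2 + a₃ * z ^ 3 + a₄ * z ^ 4)
    (hPDE : ∀ x : ℝ, 0 ≤ x → ∀ z ∈ I,
      ∑ k : Fin (n + 1), g' k x * z ^ (k : ℕ) =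
        b z * (∑ k : Fin (n + 1), g k x * (k : ℕ) * z ^ ((k : ℕ) - 1)) +
          (1 / 2) * a z *
            (∑ k : Fin (n + 1), g k x * (k : ℕ) * ((k : ℕ) - 1 : ℝ) * z ^ ((k : ℕ) - 2)) -
          R z * ∑ k : Fin (n + 1), g k x * z ^ (k : ℕ)) :
    R₂ = (n : ℝ) / 2 * b₃ ∧
    R₂ = -((n : ℝ) * ((n : ℝ) - 1) / 2) * a₄ ∧
    R₁ = (n : ℝ) * b₂ + (n : ℝ) * ((n : ℝ) - 1) / 2 * a₃ := by
  classical
  have hn' : (1 : ℕ) ≤ n := by omega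
  -- I is infinite
  obtain ⟨u, hu, v, hv, huv⟩ := hnt
  have hIinf : I.Infinite := by
    rcases huv.lt_or_gt with h | h
    · exact (Set.Icc_infinite h).mono (hI.out hu hv)
    · exact (Set.Icc_infinite h).mono (hI.out hv hu)
  -- distinguished indices
  set N : Fin (n+1) := ⟨n, Nat.lt_succ_self n⟩ with hNdef
  set N1 : Fin (n+1) := ⟨n - 1, by omega⟩ with hN1def
  have hNN1 : N1 ≠ N := by
    rw [hN1def, hNdef]
    simp only [ne_eq, Fin.mk.injEq]
    omega
  -- the polynomial family vanishes identically
  have hQ0 : ∀ x : ℝ, 0 ≤ x →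
      QQ n R₀ R₁ R₂ b₀ b₁ b₂ b₃ a₀ a₁ a₂ a₃ a₄ g g' x = 0 := by
    intro x hx
    apply Polynomial.eq_zero_of_infinite_isRoot
    apply hIinf.mono
    intro z hz
    have h := hPDE x hx z hz
    rw [hb z hz, ha z hz, hR z hz] at h
    simp only [Set.mem_setOf_eq, Polynomial.IsRoot, QQ_eval]
    linear_combination h
  have hval : ∀ k : Fin (n+1), (k : ℕ) ≤ n := fun k => Nat.lt_succ_iff.mp k.isLt
  -- high coefficients of the S-polynomials vanish
  have hS1hi : ∀ (x : ℝ) (m : ℕ), n ≤ m →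
      (sP n (fun k => g k x * ((k : ℕ) : ℝ)) (fun k => (k : ℕ) - 1)).coeff m = 0 := by
    intro x m hm
    apply sP_coeff_zero
    intro bb hb'
    have h' : m = (bb : ℕ) - 1 := hb'
    exfalso; have := hval bb; omega
  have hS2hi : ∀ (x : ℝ) (m : ℕ), n - 1 ≤ m →
      (sP n (fun k => g k x * ((k : ℕ) : ℝ) * (((k : ℕ) : ℝ) - 1)) (fun k => (k : ℕ) - 2)).coeff m = 0 := by
    intro x m hm
    apply sP_coeff_zero
    intro bb hb'
    have h' : m = (bb : ℕ) - 2 := hb'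
    exfalso; have := hval bb; omega
  have hS0hi : ∀ (x : ℝ) (m : ℕ), n + 1 ≤ m →
      (sP n (fun k => g k x) (fun k => (k : ℕ))).coeff m = 0 := by
    intro x m hm
    apply sP_coeff_zero
    intro bb hb'
    have h' : m = (bb : ℕ) := hb'
    exfalso; have := hval bb; omega
  have hGhi : ∀ (x : ℝ) (m : ℕ), n + 1 ≤ m →
      (sP n (fun k => g' k x) (fun k => (k : ℕ))).coeff m = 0 := by
    intro x m hm
    apply sP_coeff_zero
    intro bb hb'
    have h' : m = (bb : ℕ) := hb'
    exfalso; have := hval bb; omega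
  -- specific coefficients
  have hS0n : ∀ x : ℝ, (sP n (fun k => g k x) (fun k => (k : ℕ))).coeff n = g N x := by
    intro x
    apply sP_coeff_single n _ _ _ N rfl
    intro bb hb' h
    have h' : n = (bb : ℕ) := h
    exact absurd (Fin.ext (show (bb : ℕ) = n by omega)) hb'
  have hS0n1 : ∀ x : ℝ, (sP n (fun k => g k x) (fun k => (k : ℕ))).coeff (n - 1) = g N1 x := by
    intro x
    apply sP_coeff_single n _ _ _ N1 rfl
    intro bb hb' h
    have h' : n - 1 = (bb : ℕ) := h
    exact absurd (Fin.ext (show (bb : ℕ) = n - 1 by omega)) hb'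
  have hS1n1 : ∀ x : ℝ,
      (sP n (fun k => g k x * ((k : ℕ) : ℝ)) (fun k => (k : ℕ) - 1)).coeff (n - 1)
        = g N x * (n : ℝ) := by
    intro x
    apply sP_coeff_single n _ _ _ N rfl
    intro bb hb' h
    have h' : n - 1 = (bb : ℕ) - 1 := h
    exact absurd (Fin.ext (show (bb : ℕ) = n by have := hval bb; omega)) hb'
  have hS1n2 : ∀ x : ℝ,
      (sP n (fun k => g k x * ((k : ℕ) : ℝ)) (fun k => (k : ℕ) - 1)).coeff (n - 2)
        = g N1 x * ((n - 1 : ℕ) : ℝ) := by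
    intro x
    apply sP_coeff_single n _ _ _ N1 (by show n - 2 = n - 1 - 1; omega)
    intro bb hb' h
    have h' : n - 2 = (bb : ℕ) - 1 := h
    by_cases hb0 : (bb : ℕ) = 0
    · show g bb x * ((bb : ℕ) : ℝ) = 0
      rw [hb0]; simp
    · exact absurd (Fin.ext (show (bb : ℕ) = n - 1 by have := hval bb; omega)) hb'
  have hS2n2 : ∀ x : ℝ,
      (sP n (fun k => g k x * ((k : ℕ) : ℝ) * (((k : ℕ) : ℝ) - 1)) (fun k => (k : ℕ) - 2)).coeff (n - 2)
        = g N x * (n : ℝ) * ((n : ℝ) - 1) := by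
    intro x
    apply sP_coeff_single n _ _ _ N rfl
    intro bb hb' h
    have h' : n - 2 = (bb : ℕ) - 2 := h
    by_cases hb1 : (bb : ℕ) ≤ 1
    · show g bb x * ((bb : ℕ) : ℝ) * (((bb : ℕ) : ℝ) - 1) = 0
      interval_cases hbv : (bb : ℕ) <;> simp
    · exact absurd (Fin.ext (show (bb : ℕ) = n by have := hval bb; omega)) hb'
  have hS2n3 : ∀ x : ℝ, 3 ≤ n →
      (sP n (fun k => g k x * ((k : ℕ) : ℝ) * (((k : ℕ) : ℝ) - 1)) (fun k => (k : ℕ) - 2)).coeff (n - 3)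
        = g N1 x * ((n - 1 : ℕ) : ℝ) * (((n - 1 : ℕ) : ℝ) - 1) := by
    intro x hn3
    apply sP_coeff_single n _ _ _ N1 (by show n - 3 = n - 1 - 2; omega)
    intro bb hb' h
    have h' : n - 3 = (bb : ℕ) - 2 := h
    by_cases hb1 : (bb : ℕ) ≤ 1
    · show g bb x * ((bb : ℕ) : ℝ) * (((bb : ℕ) : ℝ) - 1) = 0
      interval_cases hbv : (bb : ℕ) <;> simp
    · exact absurd (Fin.ext (show (bb : ℕ) = n - 1 by have := hval bb; omega)) hb'
  have hcast : ((n - 1 : ℕ) : ℝ) = (n : ℝ) - 1 := by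
    rw [Nat.cast_sub hn']; norm_num
  -- equation from coefficient n+2
  have hA : ∀ x : ℝ, 0 ≤ x →
      ((n : ℝ) * b₃ + (n : ℝ) * ((n : ℝ) - 1) / 2 * a₄ - R₂) * g N x = 0 := by
    intro x hx
    have h := congrArg (fun p : Polynomial ℝ => p.coeff (n + 2)) (hQ0 x hx)
    simp only [Polynomial.coeff_zero] at h
    rw [QQ_coeff] at h
    have t1 : 1 ≤ n + 2 := by omega
    have t2 : 2 ≤ n + 2 := by omega
    have t3 : 3 ≤ n + 2 := by omega
    have t4 : 4 ≤ n + 2 := by omega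
    simp only [t1, t2, t3, t4, if_true] at h
    rw [show n + 2 - 1 = n + 1 by omega, show n + 2 - 2 = n by omega,
        show n + 2 - 3 = n - 1 by omega, show n + 2 - 4 = n - 2 by omega] at h
    rw [hGhi x (n + 2) (by omega),
        hS1hi x (n + 2) (by omega), hS1hi x (n + 1) (by omega), hS1hi x n (by omega),
        hS1n1 x,
        hS2hi x (n + 2) (by omega), hS2hi x (n + 1) (by omega), hS2hi x n (by omega),
        hS2hi x (n - 1) (by omega), hS2n2 x,
        hS0hi x (n + 2) (by omega), hS0hi x (n + 1) (by omega), hS0n x] at h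
    linear_combination -h
  -- equation from coefficient n+1
  have hB : ∀ x : ℝ, 0 ≤ x →
      (((n : ℝ) - 1) * b₃ + ((n : ℝ) - 1) * ((n : ℝ) - 2) / 2 * a₄ - R₂) * g N1 x
        + ((n : ℝ) * b₂ + (n : ℝ) * ((n : ℝ) - 1) / 2 * a₃ - R₁) * g N x = 0 := by
    intro x hx
    have h := congrArg (fun p : Polynomial ℝ => p.coeff (n + 1)) (hQ0 x hx)
    simp only [Polynomial.coeff_zero] at h
    rw [QQ_coeff] at h
    have t1 : 1 ≤ n + 1 := by omega
    have t2 : 2 ≤ n + 1 := by omega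
    have t3 : 3 ≤ n + 1 := by omega
    simp only [t1, t2, t3, if_true] at h
    rw [show n + 1 - 1 = n by omega, show n + 1 - 2 = n - 1 by omega,
        show n + 1 - 3 = n - 2 by omega] at h
    have hT : (if 4 ≤ n + 1 then
        (sP n (fun k => g k x * ((k : ℕ) : ℝ) * (((k : ℕ) : ℝ) - 1)) (fun k => (k : ℕ) - 2)).coeff (n + 1 - 4)
        else 0) = g N1 x * ((n : ℝ) - 1) * ((n : ℝ) - 2) := by
      rcases Nat.lt_or_ge n 3 with h3 | h3
      · rw [if_neg (by omega)]
        have hn2 : n = 2 := by omega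
        have : (n : ℝ) = 2 := by rw [hn2]; norm_num
        rw [this]; ring
      · rw [if_pos (by omega), show n + 1 - 4 = n - 3 by omega, hS2n3 x h3, hcast]
        ring
    rw [hT] at h
    rw [hGhi x (n + 1) (by omega),
        hS1hi x (n + 1) (by omega), hS1hi x n (by omega), hS1n1 x, hS1n2 x,
        hS2hi x (n + 1) (by omega), hS2hi x n (by omega), hS2hi x (n - 1) (by omega),
        hS2n2 x,
        hS0hi x (n + 1) (by omega), hS0n x, hS0n1 x, hcast] at h
    linear_combination -h
  -- extract coefficient equations via linear independence
  rw [Fintype.linearIndependent_iff] at hli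
  have hc1 : (n : ℝ) * b₃ + (n : ℝ) * ((n : ℝ) - 1) / 2 * a₄ - R₂ = 0 := by
    have key := hli (fun k => if k = N then
        ((n : ℝ) * b₃ + (n : ℝ) * ((n : ℝ) - 1) / 2 * a₄ - R₂) else 0) ?_ N
    · simpa using key
    · funext p
      obtain ⟨x, hx⟩ := p
      simp only [Finset.sum_apply, Pi.smul_apply, Set.restrict_apply, smul_eq_mul,
        Pi.zero_apply]
      rw [Finset.sum_eq_single N]
      · rw [if_pos rfl]; exact hA x hx
      · intro bb _ hb'; rw [if_neg hb', zero_mul]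
      · intro hc; exact absurd (Finset.mem_univ N) hc
  have key2 := hli (fun k =>
      if k = N1 then (((n : ℝ) - 1) * b₃ + ((n : ℝ) - 1) * ((n : ℝ) - 2) / 2 * a₄ - R₂)
      else if k = N then ((n : ℝ) * b₂ + (n : ℝ) * ((n : ℝ) - 1) / 2 * a₃ - R₁) else 0) ?_
  · have hc2 : ((n : ℝ) - 1) * b₃ + ((n : ℝ) - 1) * ((n : ℝ) - 2) / 2 * a₄ - R₂ = 0 := by
      have := key2 N1; simpa using this
    have hc3 : (n : ℝ) * b₂ + (n : ℝ) * ((n : ℝ) - 1) / 2 * a₃ - R₁ = 0 := by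
      have := key2 N
      rw [if_neg hNN1.symm, if_pos rfl] at this
      exact this
    refine ⟨?_, ?_, ?_⟩
    · linear_combination (((n : ℝ) - 2) / 2) * hc1 - ((n : ℝ) / 2) * hc2
    · linear_combination ((n : ℝ) - 1) * hc1 - (n : ℝ) * hc2
    · linear_combination -hc3
  · funext p
    obtain ⟨x, hx⟩ := p
    simp only [Finset.sum_apply, Pi.smul_apply, Set.restrict_apply, smul_eq_mul,
      Pi.zero_apply]
    have hsplit : ∀ k : Fin (n+1),
        (if k = N1 then (((n : ℝ) - 1) * b₃ + ((n : ℝ) - 1) * ((n : ℝ) - 2) / 2 * a₄ - R₂)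
         else if k = N then ((n : ℝ) * b₂ + (n : ℝ) * ((n : ℝ) - 1) / 2 * a₃ - R₁) else 0) * g k x
        = (if k = N1 then (((n : ℝ) - 1) * b₃ + ((n : ℝ) - 1) * ((n : ℝ) - 2) / 2 * a₄ - R₂) * g N1 x else 0)
          + (if k = N then ((n : ℝ) * b₂ + (n : ℝ) * ((n : ℝ) - 1) / 2 * a₃ - R₁) * g N x else 0) := by
      intro k
      by_cases h1 : k = N1
      · subst h1
        rw [if_pos rfl, if_pos rfl, if_neg hNN1, add_zero]
      · by_cases h2 : k = N
        · subst h2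
          rw [if_neg h1, if_pos rfl, if_neg h1, if_pos rfl, zero_add]
        · rw [if_neg h1, if_neg h2, if_neg h1, if_neg h2, zero_mul, add_zero]
    change ∑ k : Fin (n+1), _ * g k x = 0
    rw [Finset.sum_congr rfl fun k _ => hsplit k, Finset.sum_add_distrib,
      Finset.sum_ite_eq' Finset.univ N1, Finset.sum_ite_eq' Finset.univ N]
    simp only [Finset.mem_univ, if_true]
    exact hB x hx
end

section
/- In the case n = 1: if H(x,z) = g₀(x) + g₁(x)z with g₀, g₁ differentiable and linearly independent, and ∂ₓH = b ∂_z H + (1/2)σ² ∂_{zz}H - RH on ℝ≥0 × I for a non-trivial interval I, then R(z) = R₀ + R₁z is affine, b(z) = b₀ + b₁z + b₂z² is quadratic with b₂ = R₁, and g₀' = -R₀g₀ + b₀g₁, g₁' = -R₁g₀ + (b₁ - R₀)g₁. -/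
/-- Classification in the case `n = 1`: if `H(x,z) = g₀(x) + g₁(x) z` with
`g₀, g₁` differentiable and linearly independent satisfies
`∂ₓH = b ∂_zH + (1/2)σ² ∂_{zz}H - RH` on `ℝ₊ × I` (`∂_{zz}H ≡ 0`), then
`R` is affine, `b` is quadratic with `b₂ = R₁`, and `g₀, g₁` solve the
stated linear ODE system. -/
theorem polynomial_model_affine_case
    (I : Set ℝ) (hI : I.OrdConnected) (hnt : ∃ x ∈ I, ∃ y ∈ I, x ≠ y)
    (g₀ g₁ g₀' g₁' : ℝ → ℝ)
    (hderiv₀ : ∀ x : ℝ, 0 ≤ x → HasDerivWithinAt g₀ (g₀' x) (Set.Ici 0) x)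
    (hderiv₁ : ∀ x : ℝ, 0 ≤ x → HasDerivWithinAt g₁ (g₁' x) (Set.Ici 0) x)
    (hli : LinearIndependent ℝ
      ![(Set.Ici (0 : ℝ)).restrict g₀, (Set.Ici (0 : ℝ)).restrict g₁])
    (b R : ℝ → ℝ)
    (hPDE : ∀ x : ℝ, 0 ≤ x → ∀ z ∈ I,
      g₀' x + g₁' x * z = b z * g₁ x - R z * (g₀ x + g₁ x * z)) :
    ∃ R₀ R₁ b₀ b₁ b₂ : ℝ,
      (∀ z ∈ I, R z = R₀ + R₁ * z) ∧
      (∀ z ∈ I, b z = b₀ + b₁ * z + b₂ * z ^ 2) ∧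
      b₂ = R₁ ∧
      (∀ x : ℝ, 0 ≤ x →
        g₀' x = -R₀ * g₀ x + b₀ * g₁ x ∧
        g₁' x = -R₁ * g₀ x + (b₁ - R₀) * g₁ x) := by

  obtain ⟨z₁, hz₁, z₂, hz₂, hne⟩ := hnt
  have hd : z₂ - z₁ ≠ 0 := sub_ne_zero.mpr (Ne.symm hne)
  have key : ∀ α β : ℝ, (∀ x : ℝ, 0 ≤ x → α * g₀ x + β * g₁ x = 0) →
      α = 0 ∧ β = 0 := by
    intro α β h
    rw [Fintype.linearIndependent_iff] at hli
    have h0 := hli ![α, β] ?_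
    · exact ⟨h0 0, h0 1⟩
    · funext x
      have := h x x.2
      simp only [Fin.sum_univ_two, Matrix.cons_val_zero, Matrix.cons_val_one,
        Matrix.head_cons, Pi.add_apply, Pi.smul_apply, Set.restrict_apply,
        smul_eq_mul, Pi.zero_apply]
      exact this
  set R₁ : ℝ := (R z₂ - R z₁) / (z₂ - z₁) with hR₁
  set c₁ : ℝ := (b z₂ - b z₁ - R z₂ * z₂ + R z₁ * z₁) / (z₂ - z₁) with hc₁
  set R₀ : ℝ := R z₁ - R₁ * z₁ with hR₀
  set b₀ : ℝ := b z₁ - R z₁ * z₁ - z₁ * c₁ with hb₀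
  set b₁ : ℝ := c₁ + R₀ with hb₁
  have hg₁ : ∀ x : ℝ, 0 ≤ x → g₁' x = -R₁ * g₀ x + c₁ * g₁ x := by
    intro x hx
    have E₁ := hPDE x hx z₁ hz₁
    have E₂ := hPDE x hx z₂ hz₂
    rw [hR₁, hc₁]
    field_simp
    linear_combination E₂ - E₁
  have hg₀ : ∀ x : ℝ, 0 ≤ x → g₀' x = -R₀ * g₀ x + b₀ * g₁ x := by
    intro x hx
    have E₁ := hPDE x hx z₁ hz₁
    have h1 := hg₁ x hx
    rw [hb₀, hR₀, hR₁, hc₁] at *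
    field_simp at h1 ⊢
    linear_combination (z₂ - z₁) * E₁ - z₁ * h1
  have main : ∀ z ∈ I, R z = R₀ + R₁ * z ∧ b z = b₀ + b₁ * z + R₁ * z ^ 2 := by
    intro z hz
    have hk := key (R z - R₀ - R₁ * z) (b₀ + c₁ * z + R z * z - b z) ?_
    · have hR : R z = R₀ + R₁ * z := by linarith [hk.1]
      refine ⟨hR, ?_⟩
      rw [hb₁]
      linear_combination z * hR - hk.2
    · intro x hx
      have E := hPDE x hx z hz
      have h0 := hg₀ x hx
      have h1 := hg₁ x hx
      linear_combination E - h0 - z * h1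
  refine ⟨R₀, R₁, b₀, b₁, R₁, fun z hz => (main z hz).1, fun z hz => (main z hz).2,
    rfl, fun x hx => ⟨hg₀ x hx, ?_⟩⟩
  rw [hg₁ x hx, hb₁]; ring
end

section
/- Suppose functions A_k : I → ℝ, k = 0,…,n, and differentiable linearly independent functions g_k : ℝ≥0 → ℝ satisfy Σ_{k=0}^n g_k'(x) z^k = Σ_{k=0}^n g_k(x) A_k(z) for all x ≥ 0 and z ∈ I. Then each A_k is a polynomial of degree at most n. -/
open scoped BigOperators

/-- For a linearly independent family of functions there exist evaluation
points making the evaluation matrix invertible. -/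
lemma exists_points_isUnit_eval_matrix {m : ℕ} {α : Type*}
    (f : Fin m → α → ℝ) (hli : LinearIndependent ℝ f) :
    ∃ x : Fin m → α, IsUnit (Matrix.of fun j k => f k (x j)) := by
  classical
  set w : α → (Fin m → ℝ) := fun a k => f k a with hw
  -- the span of the evaluation vectors is everything
  have hspan : Submodule.span ℝ (Set.range w) = ⊤ := by
    by_contra h
    obtain ⟨φ, hφne, hφ⟩ :=
      (Submodule.span ℝ (Set.range w)).exists_dual_map_eq_bot_of_lt_top
        (lt_top_iff_ne_top.mpr h) inferInstance
    -- φ vanishes on all w a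
    have hzero : ∀ a : α, φ (w a) = 0 := by
      intro a
      have : φ (w a) ∈ Submodule.map φ (Submodule.span ℝ (Set.range w)) :=
        Submodule.mem_map_of_mem (Submodule.subset_span ⟨a, rfl⟩)
      rw [hφ] at this
      simpa using this
    -- so the coefficients c k := φ (basis k) kill f
    set c : Fin m → ℝ := fun k => φ (fun j => if k = j then 1 else 0) with hc
    have hcf : ∀ a : α, ∑ k, c k * f k a = 0 := by
      intro a
      have := hzero a
      rw [LinearMap.pi_apply_eq_sum_univ φ (w a)] at this
      simpa [mul_comm, hw, hc] using this
    have : ∀ k, c k = 0 := by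
      have := Fintype.linearIndependent_iff.mp hli c ?_
      · exact this
      · funext a
        simpa [mul_comm] using hcf a
    apply hφne
    apply LinearMap.ext
    intro v
    rw [LinearMap.pi_apply_eq_sum_univ φ v]
    simp only [LinearMap.zero_apply]
    refine Finset.sum_eq_zero fun k _ => ?_
    have := this k
    simp only [hc] at this
    rw [this, smul_zero]
  obtain ⟨t, hts, htspan, htli⟩ := exists_linearIndependent ℝ (Set.range w)
  rw [hspan] at htspan
  have htfin : t.Finite := htli.setFinite
  haveI : Fintype t := htfin.fintype
  have hcard : Fintype.card t = m := by
    have b : Module.Basis t ℝ (Fin m → ℝ) := Module.Basis.mk htli (by rw [Subtype.range_coe, htspan])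
    have := Module.finrank_eq_card_basis b
    simp at this
    rw [Fintype.card_eq_nat_card, Nat.card_coe_set_eq]
    omega
  obtain ⟨e⟩ := Fintype.truncEquivFinOfCardEq hcard |>.nonempty
  -- points
  have hx : ∀ j : Fin m, ∃ a : α, w a = (e.symm j : Fin m → ℝ) := by
    intro j
    have : ((e.symm j : (Fin m → ℝ))) ∈ Set.range w := hts (e.symm j).2
    exact this
  choose x hx using hx
  refine ⟨x, ?_⟩
  rw [← Matrix.linearIndependent_rows_iff_isUnit]
  have : (fun j => (Matrix.of fun j k => f k (x j)) j) =
      fun j => ((e.symm j : Fin m → ℝ)) := by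
    funext j; rw [← hx j]; rfl
  show LinearIndependent ℝ (fun j => (Matrix.of fun j k => f k (x j)) j)
  rw [this]
  exact htli.comp e.symm e.symm.injective

/-- If differentiable, linearly independent functions `g_k` satisfy
`Σ g_k'(x) z^k = Σ g_k(x) A_k(z)` for all `x ≥ 0, z ∈ I`, then each
`A_k` agrees on `I` with a polynomial of degree at most `n`. -/
theorem coefficient_functions_are_polynomials
    (n : ℕ)
    (I : Set ℝ) (hI : I.OrdConnected) (hnt : ∃ x ∈ I, ∃ y ∈ I, x ≠ y)
    (g g' : Fin (n + 1) → ℝ → ℝ)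
    (hderiv : ∀ k, ∀ x : ℝ, 0 ≤ x →
      HasDerivWithinAt (g k) (g' k x) (Set.Ici 0) x)
    (hli : LinearIndependent ℝ fun k => (Set.Ici (0 : ℝ)).restrict (g k))
    (A : Fin (n + 1) → ℝ → ℝ)
    (hEq : ∀ x : ℝ, 0 ≤ x → ∀ z ∈ I,
      ∑ k : Fin (n + 1), g' k x * z ^ (k : ℕ) =
        ∑ k : Fin (n + 1), g k x * A k z) :
    ∀ k, ∃ p : Polynomial ℝ, p.degree ≤ n ∧ ∀ z ∈ I, A k z = p.eval z := by
  classical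
  obtain ⟨pts, hM⟩ := exists_points_isUnit_eval_matrix _ hli
  set M : Matrix (Fin (n + 1)) (Fin (n + 1)) ℝ :=
    Matrix.of fun j k => (Set.Ici (0 : ℝ)).restrict (g k) (pts j) with hMdef
  have hdet : IsUnit M.det := M.isUnit_iff_isUnit_det.mp hM
  have hinv : M⁻¹ * M = 1 := Matrix.nonsing_inv_mul M hdet
  -- the solved formula for A
  have key : ∀ z ∈ I, ∀ k, A k z =
      ∑ j, M⁻¹ k j * ∑ i : Fin (n + 1), g' i (pts j) * z ^ (i : ℕ) := by
    intro z hz k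
    have hmv : M.mulVec (fun k => A k z) =
        fun j => ∑ i : Fin (n + 1), g' i (pts j) * z ^ (i : ℕ) := by
      funext j
      simp only [Matrix.mulVec, dotProduct, hMdef, Matrix.of_apply,
        Set.restrict_apply]
      exact (hEq (pts j) (pts j).2 z hz).symm
    have : M⁻¹.mulVec (M.mulVec (fun k => A k z)) = fun k => A k z := by
      rw [Matrix.mulVec_mulVec, hinv, Matrix.one_mulVec]
    rw [hmv] at this
    rw [← congrFun this k]
    simp [Matrix.mulVec, dotProduct]
  intro k
  refine ⟨∑ i : Fin (n + 1),
    Polynomial.C (∑ j, M⁻¹ k j * g' i (pts j)) * Polynomial.X ^ (i : ℕ), ?_, ?_⟩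
  · refine (Polynomial.degree_sum_le _ _).trans ?_
    refine Finset.sup_le fun i _ => ?_
    exact (Polynomial.degree_C_mul_X_pow_le _ _).trans (by exact_mod_cast Nat.cast_le.mpr i.is_le)
  · intro z hz
    rw [key z hz k]
    simp only [Polynomial.eval_finset_sum, Polynomial.eval_mul, Polynomial.eval_C,
      Polynomial.eval_pow, Polynomial.eval_X]
    simp_rw [Finset.mul_sum, Finset.sum_mul, mul_assoc]
    exact Finset.sum_comm
end

section
/- Under the hypotheses of the previous symmetry result, every eigenvalue λ of the linear map S satisfies λ ≤ -inf_{z∈(-1,1)} R(z). In particular all eigenvalues of S are real. -/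
open scoped BigOperators
open MeasureTheory Filter Topology
open Polynomial Set Matrix


noncomputable def gePol {n : ℕ} (p : Fin (n+1) → ℝ) : Polynomial ℝ :=
  ∑ k : Fin (n+1), Polynomial.C (p k) * Polynomial.X ^ (k : ℕ)

lemma gePol_eval {n : ℕ} (p : Fin (n+1) → ℝ) (z : ℝ) :
    (gePol p).eval z = ∑ k : Fin (n+1), p k * z ^ (k : ℕ) := by
  simp [gePol, Polynomial.eval_finset_sum]

lemma gePol_ne_zero {n : ℕ} {p : Fin (n+1) → ℝ} (hp : p ≠ 0) : gePol p ≠ 0 := by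
  obtain ⟨k, hk⟩ : ∃ k, p k ≠ 0 := by
    by_contra h; push_neg at h; exact hp (funext h)
  intro h
  have : (gePol p).coeff (k : ℕ) = p k := by
    rw [gePol, Polynomial.finset_sum_coeff]
    rw [Finset.sum_eq_single k]
    · simp
    · intro j _ hj
      simp only [Polynomial.coeff_C_mul, Polynomial.coeff_X_pow]
      rw [if_neg (fun h => hj (Fin.val_injective h.symm)), mul_zero]
    · simp
  rw [h] at this; simp at this; exact hk this.symm

lemma geInt {f : ℝ → ℝ} (hf_int : IntegrableOn f (Set.Ioo (-1 : ℝ) 1))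
    {g : ℝ → ℝ} (hg : ContinuousOn g (Set.Icc (-1 : ℝ) 1)) :
    IntegrableOn (fun z => g z * f z) (Set.Ioo (-1 : ℝ) 1) := by
  obtain ⟨C, hC⟩ := (isCompact_Icc).exists_bound_of_continuousOn hg
  refine Integrable.bdd_mul (c := C) hf_int
    ((hg.mono Set.Ioo_subset_Icc_self).aestronglyMeasurable measurableSet_Ioo) ?_
  filter_upwards [ae_restrict_mem measurableSet_Ioo] with x hx
  exact hC x (Set.Ioo_subset_Icc_self hx)

lemma geNonneg {f : ℝ → ℝ} (hf_pos : ∀ z ∈ Set.Ioo (-1 : ℝ) 1, 0 < f z)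
    (P : Polynomial ℝ) :
    0 ≤ ∫ z in Set.Ioo (-1 : ℝ) 1, P.eval z * P.eval z * f z := by
  refine setIntegral_nonneg measurableSet_Ioo fun z hz =>
    mul_nonneg (mul_self_nonneg _) (hf_pos z hz).le

lemma gePos {f : ℝ → ℝ} (hf_pos : ∀ z ∈ Set.Ioo (-1 : ℝ) 1, 0 < f z)
    (hf_int : IntegrableOn f (Set.Ioo (-1 : ℝ) 1))
    {P : Polynomial ℝ} (hP : P ≠ 0) :
    0 < ∫ z in Set.Ioo (-1 : ℝ) 1, P.eval z * P.eval z * f z := by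
  have hint : IntegrableOn (fun z => P.eval z * P.eval z * f z) (Set.Ioo (-1:ℝ) 1) :=
    geInt hf_int ((P.continuous.mul P.continuous).continuousOn)
  rw [setIntegral_pos_iff_support_of_nonneg_ae ?_ hint]
  · have hroots : ({z : ℝ | P.IsRoot z}).Finite := Polynomial.finite_setOf_isRoot hP
    have hsub : Set.Ioo (-1:ℝ) 1 \ {z : ℝ | P.IsRoot z} ⊆
        Function.support (fun z => P.eval z * P.eval z * f z) ∩ Set.Ioo (-1:ℝ) 1 := by
      rintro z ⟨hz, hz2⟩
      refine ⟨?_, hz⟩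
      have h1 : P.eval z ≠ 0 := hz2
      have h2 : f z ≠ 0 := (hf_pos z hz).ne'
      simp [Function.mem_support, h1, h2]
    calc (0:ENNReal) < volume (Set.Ioo (-1:ℝ) 1 \ {z : ℝ | P.IsRoot z}) := by
          rw [measure_diff_null (hroots.measure_zero _), Real.volume_Ioo]
          norm_num
      _ ≤ _ := measure_mono hsub
  · filter_upwards [ae_restrict_mem measurableSet_Ioo] with z hz
    exact mul_nonneg (mul_self_nonneg _) (hf_pos z hz).le

lemma geFTC {c₀ c₁ c₂ : ℝ} {b f : ℝ → ℝ}
    (haf_diff : DifferentiableOn ℝ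
      (fun z => (1 - z ^ 2) * (c₀ + c₁ * z + c₂ * z ^ 2) * f z) (Set.Ioo (-1 : ℝ) 1))
    (hFP : ∀ z ∈ Set.Ioo (-1 : ℝ) 1,
      b z * f z =
        (1 / 2) * deriv (fun z => (1 - z ^ 2) * (c₀ + c₁ * z + c₂ * z ^ 2) * f z) z)
    (hbcL : Tendsto (fun z => (1 - z ^ 2) * (c₀ + c₁ * z + c₂ * z ^ 2) * f z)
      (𝓝[>] (-1 : ℝ)) (𝓝 0))
    (hbcR : Tendsto (fun z => (1 - z ^ 2) * (c₀ + c₁ * z + c₂ * z ^ 2) * f z)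
      (𝓝[<] (1 : ℝ)) (𝓝 0))
    (u : Polynomial ℝ) (F' : ℝ → ℝ)
    (hF' : ∀ z ∈ Set.Ioo (-1 : ℝ) 1,
      F' z = 2 * (b z * f z) * u.eval z
        + ((1 - z ^ 2) * (c₀ + c₁ * z + c₂ * z ^ 2) * f z) * u.derivative.eval z)
    (hFi : IntegrableOn F' (Set.Ioo (-1 : ℝ) 1)) :
    ∫ z in Set.Ioo (-1 : ℝ) 1, F' z = 0 := by
  set af : ℝ → ℝ := fun z => (1 - z ^ 2) * (c₀ + c₁ * z + c₂ * z ^ 2) * f z with haf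
  set G : ℝ → ℝ := fun z => af z * u.eval z with hG
  have hderiv : ∀ z ∈ Set.Ioo (-1 : ℝ) 1, HasDerivAt G (F' z) z := by
    intro z hz
    have h1 : DifferentiableAt ℝ af z :=
      (haf_diff z hz).differentiableAt (Ioo_mem_nhds hz.1 hz.2)
    have h2 : HasDerivAt af (deriv af z) z := h1.hasDerivAt
    have h3 : HasDerivAt (fun w => u.eval w) (u.derivative.eval z) z := u.hasDerivAt z
    have h4 := h2.mul h3
    have h5 : deriv af z = 2 * (b z * f z) := by
      have := hFP z hz; rw [this]; ring
    rw [hF' z hz]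
    rw [h5] at h4
    exact h4
  have hbL : Tendsto G (𝓝[>] (-1 : ℝ)) (𝓝 0) := by
    have : Tendsto (fun z => u.eval z) (𝓝[>] (-1 : ℝ)) (𝓝 (u.eval (-1))) :=
      (u.continuous.tendsto _).mono_left nhdsWithin_le_nhds
    simpa using hbcL.mul this
  have hbR : Tendsto G (𝓝[<] (1 : ℝ)) (𝓝 0) := by
    have : Tendsto (fun z => u.eval z) (𝓝[<] (1 : ℝ)) (𝓝 (u.eval 1)) :=
      (u.continuous.tendsto _).mono_left nhdsWithin_le_nhds
    simpa using hbcR.mul this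
  have hii : IntervalIntegrable F' volume (-1 : ℝ) 1 := by
    rw [intervalIntegrable_iff_integrableOn_Ioo_of_le (by norm_num)]
    exact hFi
  have h0 := intervalIntegral.integral_eq_sub_of_hasDerivAt_of_tendsto
    (by norm_num : (-1:ℝ) < 1) hderiv hii hbL hbR
  rw [sub_zero] at h0
  rw [intervalIntegral.integral_of_le (by norm_num : (-1:ℝ) ≤ 1)] at h0
  rwa [← integral_Ioc_eq_integral_Ioo]

lemma geKey {n : ℕ} {c₀ c₁ c₂ : ℝ} {b R : ℝ → ℝ}
    {S : (Fin (n + 1) → ℝ) →ₗ[ℝ] (Fin (n + 1) → ℝ)}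
    (hS : ∀ p : Fin (n + 1) → ℝ, ∀ z ∈ Set.Ioo (-1 : ℝ) 1,
      (∑ k : Fin (n + 1), S p k * z ^ (k : ℕ)) =
        (1 / 2) * ((1 - z ^ 2) * (c₀ + c₁ * z + c₂ * z ^ 2)) *
            iteratedDeriv 2 (fun z => ∑ k : Fin (n + 1), p k * z ^ (k : ℕ)) z +
          b z * deriv (fun z => ∑ k : Fin (n + 1), p k * z ^ (k : ℕ)) z -
          R z * ∑ k : Fin (n + 1), p k * z ^ (k : ℕ))
    (p : Fin (n + 1) → ℝ) (z : ℝ) (hz : z ∈ Set.Ioo (-1 : ℝ) 1) :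
    (gePol (S p)).eval z =
      (1 / 2) * ((1 - z ^ 2) * (c₀ + c₁ * z + c₂ * z ^ 2)) *
          (gePol p).derivative.derivative.eval z +
        b z * (gePol p).derivative.eval z - R z * (gePol p).eval z := by
  have e : (fun z : ℝ => ∑ k : Fin (n + 1), p k * z ^ (k : ℕ))
      = fun z => (gePol p).eval z := funext fun z => (gePol_eval p z).symm
  have h := hS p z hz
  rw [e] at h
  have e2 : deriv (fun z => (gePol p).eval z)
      = fun z => (gePol p).derivative.eval z := funext fun z => Polynomial.deriv _
  have e3 : iteratedDeriv 2 (fun z => (gePol p).eval z)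
      = fun z => (gePol p).derivative.derivative.eval z := by
    rw [show (2:ℕ) = 1 + 1 from rfl, iteratedDeriv_succ, iteratedDeriv_one, e2]
    exact funext fun z => Polynomial.deriv _
  rw [e2, e3, ← gePol_eval p z, ← gePol_eval (S p) z] at h
  exact h

lemma geSym {n : ℕ} {c₀ c₁ c₂ : ℝ} {b R f : ℝ → ℝ}
    (hf_int : IntegrableOn f (Set.Ioo (-1 : ℝ) 1))
    (haf_diff : DifferentiableOn ℝ
      (fun z => (1 - z ^ 2) * (c₀ + c₁ * z + c₂ * z ^ 2) * f z) (Set.Ioo (-1 : ℝ) 1))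
    (hFP : ∀ z ∈ Set.Ioo (-1 : ℝ) 1,
      b z * f z =
        (1 / 2) * deriv (fun z => (1 - z ^ 2) * (c₀ + c₁ * z + c₂ * z ^ 2) * f z) z)
    (hbcL : Tendsto (fun z => (1 - z ^ 2) * (c₀ + c₁ * z + c₂ * z ^ 2) * f z)
      (𝓝[>] (-1 : ℝ)) (𝓝 0))
    (hbcR : Tendsto (fun z => (1 - z ^ 2) * (c₀ + c₁ * z + c₂ * z ^ 2) * f z)
      (𝓝[<] (1 : ℝ)) (𝓝 0))
    {S : (Fin (n + 1) → ℝ) →ₗ[ℝ] (Fin (n + 1) → ℝ)}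
    (hS : ∀ p : Fin (n + 1) → ℝ, ∀ z ∈ Set.Ioo (-1 : ℝ) 1,
      (∑ k : Fin (n + 1), S p k * z ^ (k : ℕ)) =
        (1 / 2) * ((1 - z ^ 2) * (c₀ + c₁ * z + c₂ * z ^ 2)) *
            iteratedDeriv 2 (fun z => ∑ k : Fin (n + 1), p k * z ^ (k : ℕ)) z +
          b z * deriv (fun z => ∑ k : Fin (n + 1), p k * z ^ (k : ℕ)) z -
          R z * ∑ k : Fin (n + 1), p k * z ^ (k : ℕ))
    (p q : Fin (n + 1) → ℝ) :
    ∫ z in Set.Ioo (-1 : ℝ) 1, (gePol (S p)).eval z * (gePol q).eval z * f z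
      = ∫ z in Set.Ioo (-1 : ℝ) 1, (gePol p).eval z * (gePol (S q)).eval z * f z := by
  set u : Polynomial ℝ :=
    (gePol p).derivative * gePol q - gePol p * (gePol q).derivative with hu
  set F' : ℝ → ℝ := fun z =>
    (2 * ((gePol (S p)).eval z * (gePol q).eval z
      - (gePol p).eval z * (gePol (S q)).eval z)) * f z with hF'def
  have hF' : ∀ z ∈ Set.Ioo (-1 : ℝ) 1,
      F' z = 2 * (b z * f z) * u.eval z
        + ((1 - z ^ 2) * (c₀ + c₁ * z + c₂ * z ^ 2) * f z) * u.derivative.eval z := by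
    intro z hz
    simp only [hF'def, hu, Polynomial.derivative_sub, Polynomial.derivative_mul,
      Polynomial.eval_sub, Polynomial.eval_mul, Polynomial.eval_add]
    rw [geKey hS p z hz, geKey hS q z hz]
    ring
  have hFi : IntegrableOn F' (Set.Ioo (-1 : ℝ) 1) :=
    geInt hf_int (Continuous.continuousOn (by fun_prop))
  have h0 := geFTC haf_diff hFP hbcL hbcR u F' hF' hFi
  have i1 : IntegrableOn (fun z => (gePol (S p)).eval z * (gePol q).eval z * f z)
      (Set.Ioo (-1 : ℝ) 1) := geInt hf_int (Continuous.continuousOn (by fun_prop))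
  have i2 : IntegrableOn (fun z => (gePol p).eval z * (gePol (S q)).eval z * f z)
      (Set.Ioo (-1 : ℝ) 1) := geInt hf_int (Continuous.continuousOn (by fun_prop))
  have e : F' = fun z => 2 * ((gePol (S p)).eval z * (gePol q).eval z * f z
      - (gePol p).eval z * (gePol (S q)).eval z * f z) := by
    funext z; simp only [hF'def]; ring
  rw [e, MeasureTheory.integral_const_mul, integral_sub i1 i2] at h0
  have h2 : (2:ℝ) ≠ 0 := by norm_num
  have := mul_eq_zero.mp h0
  rcases this with h | h
  · exact absurd h h2
  · linarith

lemma geQuad {n : ℕ} {c₀ c₁ c₂ : ℝ} {b R f : ℝ → ℝ}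
    (hf_pos : ∀ z ∈ Set.Ioo (-1 : ℝ) 1, 0 < f z)
    (hf_int : IntegrableOn f (Set.Ioo (-1 : ℝ) 1))
    (ha_pos : ∀ z ∈ Set.Ioo (-1 : ℝ) 1,
      0 < (1 - z ^ 2) * (c₀ + c₁ * z + c₂ * z ^ 2))
    (hR_cont : ContinuousOn R (Set.Icc (-1 : ℝ) 1))
    (haf_diff : DifferentiableOn ℝ
      (fun z => (1 - z ^ 2) * (c₀ + c₁ * z + c₂ * z ^ 2) * f z) (Set.Ioo (-1 : ℝ) 1))
    (hFP : ∀ z ∈ Set.Ioo (-1 : ℝ) 1,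
      b z * f z =
        (1 / 2) * deriv (fun z => (1 - z ^ 2) * (c₀ + c₁ * z + c₂ * z ^ 2) * f z) z)
    (hbcL : Tendsto (fun z => (1 - z ^ 2) * (c₀ + c₁ * z + c₂ * z ^ 2) * f z)
      (𝓝[>] (-1 : ℝ)) (𝓝 0))
    (hbcR : Tendsto (fun z => (1 - z ^ 2) * (c₀ + c₁ * z + c₂ * z ^ 2) * f z)
      (𝓝[<] (1 : ℝ)) (𝓝 0))
    {S : (Fin (n + 1) → ℝ) →ₗ[ℝ] (Fin (n + 1) → ℝ)}
    (hS : ∀ p : Fin (n + 1) → ℝ, ∀ z ∈ Set.Ioo (-1 : ℝ) 1,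
      (∑ k : Fin (n + 1), S p k * z ^ (k : ℕ)) =
        (1 / 2) * ((1 - z ^ 2) * (c₀ + c₁ * z + c₂ * z ^ 2)) *
            iteratedDeriv 2 (fun z => ∑ k : Fin (n + 1), p k * z ^ (k : ℕ)) z +
          b z * deriv (fun z => ∑ k : Fin (n + 1), p k * z ^ (k : ℕ)) z -
          R z * ∑ k : Fin (n + 1), p k * z ^ (k : ℕ))
    (p : Fin (n + 1) → ℝ) :
    ∫ z in Set.Ioo (-1 : ℝ) 1, (gePol (S p)).eval z * (gePol p).eval z * f z
      ≤ -(sInf (R '' Set.Ioo (-1 : ℝ) 1)) *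
          ∫ z in Set.Ioo (-1 : ℝ) 1, (gePol p).eval z * (gePol p).eval z * f z := by
  set m : ℝ := sInf (R '' Set.Ioo (-1 : ℝ) 1) with hm
  have hbdd : BddBelow (R '' Set.Ioo (-1 : ℝ) 1) :=
    ((isCompact_Icc.image_of_continuousOn hR_cont).bddBelow).mono
      (Set.image_mono (f := R) Set.Ioo_subset_Icc_self)
  have hmle : ∀ z ∈ Set.Ioo (-1 : ℝ) 1, m ≤ R z := fun z hz =>
    csInf_le hbdd ⟨z, hz, rfl⟩
  set u : Polynomial ℝ := gePol p * (gePol p).derivative with hu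
  set t1 : ℝ → ℝ := fun z =>
    (2 * ((gePol (S p)).eval z * (gePol p).eval z)) * f z with ht1
  set t2 : ℝ → ℝ := fun z =>
    ((1 - z ^ 2) * (c₀ + c₁ * z + c₂ * z ^ 2) *
      ((gePol p).derivative.eval z * (gePol p).derivative.eval z)) * f z with ht2
  set t3 : ℝ → ℝ := fun z =>
    (2 * R z * ((gePol p).eval z * (gePol p).eval z)) * f z with ht3
  set F' : ℝ → ℝ := fun z => t1 z + t2 z + t3 z with hF'def
  have hF' : ∀ z ∈ Set.Ioo (-1 : ℝ) 1,
      F' z = 2 * (b z * f z) * u.eval z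
        + ((1 - z ^ 2) * (c₀ + c₁ * z + c₂ * z ^ 2) * f z) * u.derivative.eval z := by
    intro z hz
    simp only [hF'def, ht1, ht2, ht3, hu, Polynomial.derivative_mul,
      Polynomial.eval_mul, Polynomial.eval_add]
    rw [geKey hS p z hz]
    ring
  have i1 : IntegrableOn t1 (Set.Ioo (-1 : ℝ) 1) :=
    geInt hf_int (Continuous.continuousOn (by fun_prop))
  have i2 : IntegrableOn t2 (Set.Ioo (-1 : ℝ) 1) :=
    geInt hf_int (Continuous.continuousOn (by fun_prop))
  have i3 : IntegrableOn t3 (Set.Ioo (-1 : ℝ) 1) := by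
    refine geInt hf_int ?_
    refine ContinuousOn.mul (ContinuousOn.mul continuousOn_const hR_cont) ?_
    exact Continuous.continuousOn (by fun_prop)
  have hFi : IntegrableOn F' (Set.Ioo (-1 : ℝ) 1) := (i1.add i2).add i3
  have h0 := geFTC haf_diff hFP hbcL hbcR u F' hF' hFi
  simp only [hF'def] at h0
  have e12 : ∫ z in Set.Ioo (-1 : ℝ) 1, (t1 z + t2 z)
      = (∫ z in Set.Ioo (-1 : ℝ) 1, t1 z) + ∫ z in Set.Ioo (-1 : ℝ) 1, t2 z :=
    MeasureTheory.integral_add i1 i2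
  have e123 : ∫ z in Set.Ioo (-1 : ℝ) 1, (t1 z + t2 z + t3 z)
      = (∫ z in Set.Ioo (-1 : ℝ) 1, (t1 z + t2 z)) + ∫ z in Set.Ioo (-1 : ℝ) 1, t3 z :=
    MeasureTheory.integral_add (i1.add i2) i3
  rw [e123, e12] at h0
  -- t2 nonneg
  have h2 : 0 ≤ ∫ z in Set.Ioo (-1 : ℝ) 1, t2 z := by
    refine setIntegral_nonneg measurableSet_Ioo fun z hz => ?_
    exact mul_nonneg (mul_nonneg (ha_pos z hz).le (mul_self_nonneg _)) (hf_pos z hz).le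
  -- base integral and its scaled version
  have ibase : IntegrableOn (fun z => (gePol p).eval z * (gePol p).eval z * f z)
      (Set.Ioo (-1 : ℝ) 1) := geInt hf_int (Continuous.continuousOn (by fun_prop))
  have h3 : (2 * m) * ∫ z in Set.Ioo (-1 : ℝ) 1, (gePol p).eval z * (gePol p).eval z * f z
      ≤ ∫ z in Set.Ioo (-1 : ℝ) 1, t3 z := by
    rw [← MeasureTheory.integral_const_mul]
    refine setIntegral_mono_on (ibase.const_mul _) i3 measurableSet_Ioo fun z hz => ?_
    have hnn : 0 ≤ (gePol p).eval z * (gePol p).eval z * f z :=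
      mul_nonneg (mul_self_nonneg _) (hf_pos z hz).le
    have := hmle z hz
    simp only [ht3]
    nlinarith
  have h1 : ∫ z in Set.Ioo (-1 : ℝ) 1, t1 z
      = 2 * ∫ z in Set.Ioo (-1 : ℝ) 1, (gePol (S p)).eval z * (gePol p).eval z * f z := by
    rw [← MeasureTheory.integral_const_mul]
    congr 1; funext z; simp only [ht1]; ring
  rw [h1] at h0
  linarith

noncomputable def geB {n : ℕ} (f : ℝ → ℝ) (p q : Fin (n+1) → ℝ) : ℝ :=
  ∫ z in Set.Ioo (-1 : ℝ) 1, (gePol p).eval z * (gePol q).eval z * f z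

lemma gePol_add {n : ℕ} (x y : Fin (n+1) → ℝ) : gePol (x + y) = gePol x + gePol y := by
  simp [gePol, map_add, add_mul, Finset.sum_add_distrib]

lemma gePol_smul {n : ℕ} (c : ℝ) (x : Fin (n+1) → ℝ) :
    gePol (c • x) = Polynomial.C c * gePol x := by
  simp [gePol, Finset.mul_sum, mul_assoc]

lemma geB_symm {n : ℕ} (f : ℝ → ℝ) (p q : Fin (n+1) → ℝ) : geB f p q = geB f q p := by
  unfold geB; congr 1; funext z; ring

lemma geB_add_left {n : ℕ} {f : ℝ → ℝ} (hf_int : IntegrableOn f (Set.Ioo (-1 : ℝ) 1))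
    (x y q : Fin (n+1) → ℝ) : geB f (x + y) q = geB f x q + geB f y q := by
  unfold geB
  rw [← MeasureTheory.integral_add (geInt hf_int (Continuous.continuousOn (by fun_prop)))
    (geInt hf_int (Continuous.continuousOn (by fun_prop)))]
  congr 1; funext z; rw [gePol_add]; simp [Polynomial.eval_add]; ring

lemma geB_smul_left {n : ℕ} (f : ℝ → ℝ) (c : ℝ)
    (x q : Fin (n+1) → ℝ) : geB f (c • x) q = c * geB f x q := by
  unfold geB
  rw [← MeasureTheory.integral_const_mul]
  congr 1; funext z; rw [gePol_smul]; simp; ring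

/-- Under the hypotheses of the symmetry result, every eigenvalue `μ` of the
generator matrix `S` (root of its characteristic polynomial over `ℂ`) is real
and satisfies `μ ≤ -inf_{z ∈ (-1,1)} R(z)`. -/
theorem generator_eigenvalues_real_and_bounded
    (n : ℕ) (c₀ c₁ c₂ : ℝ)
    (b R f : ℝ → ℝ)
    (hf_pos : ∀ z ∈ Set.Ioo (-1 : ℝ) 1, 0 < f z)
    (hf_int : IntegrableOn f (Set.Ioo (-1 : ℝ) 1))
    (ha_pos : ∀ z ∈ Set.Ioo (-1 : ℝ) 1,
      0 < (1 - z ^ 2) * (c₀ + c₁ * z + c₂ * z ^ 2))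
    (hR_cont : ContinuousOn R (Set.Icc (-1 : ℝ) 1))
    (haf_diff : DifferentiableOn ℝ
      (fun z => (1 - z ^ 2) * (c₀ + c₁ * z + c₂ * z ^ 2) * f z) (Set.Ioo (-1 : ℝ) 1))
    (hFP : ∀ z ∈ Set.Ioo (-1 : ℝ) 1,
      b z * f z =
        (1 / 2) * deriv (fun z => (1 - z ^ 2) * (c₀ + c₁ * z + c₂ * z ^ 2) * f z) z)
    (hbcL : Tendsto (fun z => (1 - z ^ 2) * (c₀ + c₁ * z + c₂ * z ^ 2) * f z)
      (𝓝[>] (-1 : ℝ)) (𝓝 0))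
    (hbcR : Tendsto (fun z => (1 - z ^ 2) * (c₀ + c₁ * z + c₂ * z ^ 2) * f z)
      (𝓝[<] (1 : ℝ)) (𝓝 0))
    (S : (Fin (n + 1) → ℝ) →ₗ[ℝ] (Fin (n + 1) → ℝ))
    (hS : ∀ p : Fin (n + 1) → ℝ, ∀ z ∈ Set.Ioo (-1 : ℝ) 1,
      (∑ k : Fin (n + 1), S p k * z ^ (k : ℕ)) =
        (1 / 2) * ((1 - z ^ 2) * (c₀ + c₁ * z + c₂ * z ^ 2)) *
            iteratedDeriv 2 (fun z => ∑ k : Fin (n + 1), p k * z ^ (k : ℕ)) z +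
          b z * deriv (fun z => ∑ k : Fin (n + 1), p k * z ^ (k : ℕ)) z -
          R z * ∑ k : Fin (n + 1), p k * z ^ (k : ℕ)) :
    ∀ μ : ℂ,
      ((LinearMap.toMatrix' S).charpoly.map (algebraMap ℝ ℂ)).IsRoot μ →
        μ.im = 0 ∧ μ.re ≤ -sInf (R '' Set.Ioo (-1 : ℝ) 1) := by
  intro μ hroot
  set A := LinearMap.toMatrix' S with hA
  have hcp : (A.map (algebraMap ℝ ℂ)).charpoly = A.charpoly.map (algebraMap ℝ ℂ) :=
    Matrix.charpoly_map A _
  set Aℂ := A.map (algebraMap ℝ ℂ) with hAc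
  have hroot' : Aℂ.charpoly.IsRoot μ := by rw [hcp]; exact hroot
  have hdet : (Matrix.diagonal (fun _ : Fin (n+1) => μ) - Aℂ).det = 0 := by
    have h1 : Polynomial.eval μ Aℂ.charpoly = 0 := hroot'
    rw [Matrix.charpoly] at h1
    have h2 : Polynomial.eval μ (Matrix.charmatrix Aℂ).det
        = ((Matrix.charmatrix Aℂ).map (Polynomial.evalRingHom μ)).det := by
      have := RingHom.map_det (Polynomial.evalRingHom μ) (Matrix.charmatrix Aℂ)
      simpa [RingHom.mapMatrix_apply] using this
    rw [h2] at h1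
    convert h1 using 2
    ext i j
    by_cases h : i = j
    · subst h
      simp [Matrix.charmatrix_apply_eq, Matrix.diagonal_apply_eq, Matrix.sub_apply]
    · simp [Matrix.charmatrix_apply_ne _ _ _ h, Matrix.diagonal_apply_ne _ h,
        Matrix.sub_apply]
  obtain ⟨v, hv0, hv⟩ := (Matrix.exists_mulVec_eq_zero_iff).2 hdet
  have heig : ∀ i, (∑ j, ((A i j : ℝ) : ℂ) * v j) = μ * v i := by
    intro i
    have h' := congrFun hv i
    simp only [Matrix.sub_mulVec, Pi.sub_apply, Pi.zero_apply, sub_eq_zero] at h'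
    rw [Matrix.mulVec_diagonal] at h'
    have hAv : (Aℂ *ᵥ v) i = ∑ j, ((A i j : ℝ) : ℂ) * v j := by
      simp [Matrix.mulVec, dotProduct, hAc, Matrix.map_apply]
    rw [← hAv]
    exact h'.symm
  set x : Fin (n+1) → ℝ := fun i => (v i).re with hx
  set y : Fin (n+1) → ℝ := fun i => (v i).im with hy
  have hSvec : ∀ w : Fin (n+1) → ℝ, S w = A *ᵥ w := by
    intro w
    conv_lhs => rw [← Matrix.toLin'_toMatrix' S]
    rw [Matrix.toLin'_apply]
  have hSx : S x = μ.re • x + (-μ.im) • y := by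
    funext i
    have h := congrArg Complex.re (heig i)
    rw [Complex.re_sum] at h
    simp only [Complex.mul_re, Complex.ofReal_re, Complex.ofReal_im, zero_mul,
      sub_zero] at h
    rw [hSvec]
    simp only [Matrix.mulVec, dotProduct, Pi.add_apply, Pi.smul_apply,
      smul_eq_mul]
    rw [h]; ring
  have hSy : S y = μ.im • x + μ.re • y := by
    funext i
    have h := congrArg Complex.im (heig i)
    rw [Complex.im_sum] at h
    simp only [Complex.mul_im, Complex.ofReal_re, Complex.ofReal_im, zero_mul,
      add_zero] at h
    rw [hSvec]
    simp only [Matrix.mulVec, dotProduct, Pi.add_apply, Pi.smul_apply,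
      smul_eq_mul]
    rw [h]; ring
  set m := sInf (R '' Set.Ioo (-1:ℝ) 1) with hmdef
  have hBsym : geB f (S x) y = geB f x (S y) :=
    geSym hf_int haf_diff hFP hbcL hbcR hS x y
  have hBquad : ∀ p, geB f (S p) p ≤ -m * geB f p p := fun p =>
    geQuad hf_pos hf_int ha_pos hR_cont haf_diff hFP hbcL hbcR hS p
  have hBpos : ∀ p : Fin (n+1) → ℝ, p ≠ 0 → 0 < geB f p p := fun p hp =>
    gePos hf_pos hf_int (gePol_ne_zero hp)
  have hBnn : ∀ p : Fin (n+1) → ℝ, 0 ≤ geB f p p := fun p => geNonneg hf_pos _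
  have e1 : geB f (S x) y = μ.re * geB f x y + (-μ.im) * geB f y y := by
    rw [hSx, geB_add_left hf_int, geB_smul_left, geB_smul_left]
  have e2 : geB f x (S y) = μ.im * geB f x x + μ.re * geB f x y := by
    rw [geB_symm f x (S y), hSy, geB_add_left hf_int, geB_smul_left, geB_smul_left,
      geB_symm f y x]
  have hxy : x ≠ 0 ∨ y ≠ 0 := by
    by_contra h
    push_neg at h
    apply hv0
    funext i
    have hx1 := congrFun h.1 i
    have hy1 := congrFun h.2 i
    simp only [Pi.zero_apply] at hx1 hy1
    exact Complex.ext (by simpa [hx] using hx1) (by simpa [hy] using hy1)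
  have hpos : 0 < geB f x x + geB f y y := by
    rcases hxy with h | h
    · linarith [hBpos x h, hBnn y]
    · linarith [hBpos y h, hBnn x]
  have hβ : μ.im = 0 := by
    rw [e1, e2] at hBsym
    have h3 : μ.im * (geB f x x + geB f y y) = 0 := by linarith
    rcases mul_eq_zero.mp h3 with h | h
    · exact h
    · exact absurd h hpos.ne'
  refine ⟨hβ, ?_⟩
  rcases hxy with h | h
  · have hsx : S x = μ.re • x := by
      rw [hSx, hβ]; funext i; simp
    have hq := hBquad x
    rw [hsx, geB_smul_left] at hq
    have hp := hBpos x h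
    nlinarith
  · have hsy : S y = μ.re • y := by
      rw [hSy, hβ]; funext i; simp
    have hq := hBquad y
    rw [hsy, geB_smul_left] at hq
    have hp := hBpos y h
    nlinarith
end
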